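/- Let M, N ≥ 1 be integers with M ≤ N, let A be a real M×N matrix with rows a₁, …, a_M satisfying |aᵢ|₂ ≥ 1 for all i, and let ε ∈ (0,1]. Let Ā be the (M+N)×N matrix obtained by stacking A on top of ε times the N×N identity matrix. Then det(Āᵀ·Ā) ≤ C(M+N, N) · (|a₁|₂ ⋯ |a_M|₂)² · ε^{2(N−M)}. -/

import Mathlib

open Matrix Finset

-- AM-GM for PSD matrices with unit diagonal
lemma det_le_one_of_unit_diag {m : ℕ} (hm : 0 < m) (C : Matrix (Fin m) (Fin m) ℝ)
    (hC : C.PosSemidef) (hd : ∀ i, C i i = 1) : C.det ≤ 1 := by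
  set lam := hC.1.eigenvalues with hlam
  have hnn : ∀ i, 0 ≤ lam i := hC.eigenvalues_nonneg
  have hprod : C.det = ∏ i, lam i := by
    simpa using hC.1.det_eq_prod_eigenvalues
  have htr : C.trace = (m : ℝ) := by
    simp [Matrix.trace, Matrix.diag, hd]
  have htr2 : C.trace = ∑ i, lam i := by
    nth_rewrite 1 [hC.1.spectral_theorem]
    rw [Unitary.conjStarAlgAut_apply]
    rw [Matrix.trace_mul_cycle]
    have : (star (hC.1.eigenvectorUnitary : Matrix (Fin m) (Fin m) ℝ)) *
        (hC.1.eigenvectorUnitary : Matrix (Fin m) (Fin m) ℝ) = 1 :=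
      Unitary.coe_star_mul_self _
    rw [this, Matrix.one_mul]
    simp [Matrix.trace_diagonal]
    rfl
  have hsum : ∑ i, lam i = (m : ℝ) := by rw [← htr2, htr]
  have hm' : (0:ℝ) < m := by exact_mod_cast hm
  have hw : ∑ _i : Fin m, (m:ℝ)⁻¹ = 1 := by
    simp [Finset.card_univ]
    field_simp
  have hgm := Real.geom_mean_le_arith_mean_weighted Finset.univ (fun _ => (m:ℝ)⁻¹) lam
      (fun i _ => by positivity) hw (fun i _ => hnn i)
  have h1 : ∑ i, (m:ℝ)⁻¹ * lam i = 1 := by rw [← Finset.mul_sum, hsum]; field_simp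
  rw [h1] at hgm
  have h2 : ∏ i, lam i ^ ((m:ℝ)⁻¹) = (∏ i, lam i) ^ ((m:ℝ)⁻¹) :=
    Real.finset_prod_rpow _ _ (fun i _ => hnn i) _
  rw [h2] at hgm
  have hpnn : 0 ≤ ∏ i, lam i := Finset.prod_nonneg (fun i _ => hnn i)
  have h3 : ((∏ i, lam i) ^ ((m:ℝ)⁻¹)) ^ (m:ℕ) ≤ 1 := by
    calc ((∏ i, lam i) ^ ((m:ℝ)⁻¹)) ^ (m:ℕ) ≤ (1:ℝ)^(m:ℕ) :=
          pow_le_pow_left₀ (Real.rpow_nonneg hpnn _) hgm m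
    _ = 1 := one_pow m
  rw [← Real.rpow_natCast ((∏ i, lam i) ^ ((m:ℝ)⁻¹)) m, ← Real.rpow_mul hpnn,
    inv_mul_cancel₀ (ne_of_gt hm'), Real.rpow_one] at h3
  rw [hprod]; exact h3

-- Hadamard inequality for PSD matrices with positive diagonal
lemma det_le_prod_diag {m : ℕ} (hm : 0 < m) (B : Matrix (Fin m) (Fin m) ℝ)
    (hB : B.PosSemidef) (hd : ∀ i, 0 < B i i) : B.det ≤ ∏ i, B i i := by
  set e : Fin m → ℝ := fun i => (Real.sqrt (B i i))⁻¹ with he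
  set D := Matrix.diagonal e with hD
  have hDH : Dᴴ = D := by
    simp [hD]
  have hC : (D * B * D).PosSemidef := by
    have := hB.mul_mul_conjTranspose_same D
    rwa [hDH] at this
  have hCd : ∀ i, (D * B * D) i i = 1 := by
    intro i
    have hx : Real.sqrt (B i i) * Real.sqrt (B i i) = B i i := Real.mul_self_sqrt (hd i).le
    have hxpos : 0 < Real.sqrt (B i i) := Real.sqrt_pos.mpr (hd i)
    have : (D * B * D) i i = e i * B i i * e i := by
      rw [hD, Matrix.mul_diagonal, Matrix.diagonal_mul]
    rw [this, he]
    simp only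
    field_simp
    rw [Real.sq_sqrt (hd i).le]
  have hdet := det_le_one_of_unit_diag hm _ hC hCd
  rw [Matrix.det_mul, Matrix.det_mul, Matrix.det_diagonal] at hdet
  have hprodpos : 0 < ∏ i, B i i := Finset.prod_pos (fun i _ => hd i)
  have hee : (∏ i, e i) * (∏ i, e i) = (∏ i, B i i)⁻¹ := by
    rw [← Finset.prod_mul_distrib, ← Finset.prod_inv_distrib]
    apply Finset.prod_congr rfl
    intro i _
    rw [he]
    simp only
    rw [← mul_inv, Real.mul_self_sqrt (hd i).le]
  calc B.det = ((∏ i, e i) * B.det * (∏ i, e i)) * ∏ i, B i i := by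
        rw [show (∏ i, e i) * B.det * (∏ i, e i) = B.det * ((∏ i, e i) * (∏ i, e i)) by ring,
          hee, mul_assoc, inv_mul_cancel₀ (ne_of_gt hprodpos), mul_one]
    _ ≤ 1 * ∏ i, B i i := mul_le_mul_of_nonneg_right hdet hprodpos.le
    _ = ∏ i, B i i := one_mul _

lemma two_pow_le_add_choose (M N : ℕ) (h : M ≤ N) : 2 ^ M ≤ (M + N).choose M := by
  rw [Nat.add_choose_eq, Finset.Nat.sum_antidiagonal_eq_sum_range_succ_mk]
  calc 2^M = ∑ i ∈ Finset.range (M+1), M.choose i := (Nat.sum_range_choose M).symm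
    _ ≤ ∑ i ∈ Finset.range (M+1), M.choose i * N.choose ((i, M - i).2) := by
        apply Finset.sum_le_sum
        intro i _
        exact Nat.le_mul_of_pos_right _ (Nat.choose_pos ((Nat.sub_le M i).trans h))

theorem gram_determinant_bound (M N : ℕ) (hM : 1 ≤ M) (hMN : M ≤ N)
    (A : Matrix (Fin M) (Fin N) ℝ)
    (hrow : ∀ i, 1 ≤ Real.sqrt (∑ j, A i j ^ 2)) (ε : ℝ) (hε : ε ∈ Set.Ioc (0 : ℝ) 1) :
    ((Matrix.fromRows A (ε • (1 : Matrix (Fin N) (Fin N) ℝ)))ᵀ *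
        Matrix.fromRows A (ε • (1 : Matrix (Fin N) (Fin N) ℝ))).det ≤
      ((M + N).choose N : ℝ) * (∏ i, Real.sqrt (∑ j, A i j ^ 2)) ^ 2 * ε ^ (2 * (N - M)) := by
  obtain ⟨hε0, hε1⟩ := hε
  have hεne : ε ≠ 0 := ne_of_gt hε0
  set r : Fin M → ℝ := fun i => Real.sqrt (∑ j, A i j ^ 2) with hr
  -- Step 1: the Gram matrix is AᵀA + ε² I
  have step1 : (Matrix.fromRows A (ε • (1 : Matrix (Fin N) (Fin N) ℝ)))ᵀ *
      Matrix.fromRows A (ε • (1 : Matrix (Fin N) (Fin N) ℝ))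
      = Aᵀ * A + (ε^2) • (1 : Matrix (Fin N) (Fin N) ℝ) := by
    rw [Matrix.transpose_fromRows, Matrix.fromCols_mul_fromRows]
    congr 1
    rw [Matrix.transpose_smul, Matrix.transpose_one, Matrix.smul_mul, Matrix.mul_smul,
      Matrix.one_mul, smul_smul, ← pow_two]
  -- Step 2: Sylvester / Weinstein–Aronszajn
  have key : (Aᵀ * A + (ε^2) • (1 : Matrix (Fin N) (Fin N) ℝ)).det
      = ε ^ (2*(N-M)) * (A * Aᵀ + (ε^2) • (1 : Matrix (Fin M) (Fin M) ℝ)).det := by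
    have hc : ε^2 * (ε⁻¹ * ε⁻¹) = 1 := by field_simp
    have e1 : Aᵀ * A + (ε^2) • (1 : Matrix (Fin N) (Fin N) ℝ)
        = (ε^2) • ((1 : Matrix (Fin N) (Fin N) ℝ) + (ε⁻¹ • Aᵀ) * (ε⁻¹ • A)) := by
      rw [Matrix.smul_mul, Matrix.mul_smul, smul_smul, smul_add, smul_smul, hc, one_smul,
        add_comm]
    have e2 : A * Aᵀ + (ε^2) • (1 : Matrix (Fin M) (Fin M) ℝ)
        = (ε^2) • ((1 : Matrix (Fin M) (Fin M) ℝ) + (ε⁻¹ • A) * (ε⁻¹ • Aᵀ)) := by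
      rw [Matrix.smul_mul, Matrix.mul_smul, smul_smul, smul_add, smul_smul, hc, one_smul,
        add_comm]
    rw [e1, e2, Matrix.det_smul, Matrix.det_smul, Matrix.det_one_add_mul_comm]
    simp only [Fintype.card_fin]
    rw [← mul_assoc]
    congr 1
    rw [pow_mul]
    exact (pow_sub_mul_pow (ε^2) hMN).symm
  set B := A * Aᵀ + (ε^2) • (1 : Matrix (Fin M) (Fin M) ℝ) with hB
  have hAT : Aᴴ = Aᵀ := by
    ext i j
    simp [Matrix.conjTranspose_apply]
  have hPSD : B.PosSemidef := by
    apply Matrix.PosSemidef.add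
    · have := Matrix.posSemidef_self_mul_conjTranspose A
      rwa [hAT] at this
    · rw [Matrix.smul_one_eq_diagonal]
      exact Matrix.PosSemidef.diagonal (fun i => by positivity)
  have hdiag : ∀ i, B i i = (r i)^2 + ε^2 := by
    intro i
    have h1 : (r i)^2 = ∑ j, A i j ^ 2 := Real.sq_sqrt (by positivity)
    simp only [hB, Matrix.add_apply, Matrix.mul_apply, Matrix.smul_apply, Matrix.one_apply_eq,
      Matrix.transpose_apply, smul_eq_mul, mul_one, h1]
    congr 1
    exact Finset.sum_congr rfl (fun j _ => (pow_two (A i j)).symm)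
  have hdpos : ∀ i, 0 < B i i := fun i => by
    rw [hdiag i]
    positivity
  have hHad : B.det ≤ ∏ i, B i i := det_le_prod_diag hM B hPSD hdpos
  have hrpos : ∀ i, 0 < r i := fun i => lt_of_lt_of_le one_pos (hrow i)
  have hstep5 : ∏ i, B i i ≤ 2^M * (∏ i, r i)^2 := by
    calc ∏ i, B i i ≤ ∏ i, 2 * (r i)^2 := by
          apply Finset.prod_le_prod (fun i _ => (hdpos i).le)
          intro i _
          rw [hdiag i]
          have h1 : 1 ≤ r i := hrow i
          nlinarith
      _ = 2^M * (∏ i, r i)^2 := by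
          rw [Finset.prod_mul_distrib, Finset.prod_const, ← Finset.prod_pow]
          simp [Finset.card_univ, Finset.prod_pow]
  have hchoose : (2:ℝ)^M ≤ ((M+N).choose N : ℝ) := by
    have h1 : (M+N).choose M = (M+N).choose N := by
      have := Nat.choose_symm (Nat.le_add_right N M)
      rw [add_comm N M] at this
      simpa using this
    have h2 : 2^M ≤ (M+N).choose N := h1 ▸ two_pow_le_add_choose M N hMN
    exact_mod_cast h2
  rw [step1, key]
  have hεp : (0:ℝ) < ε ^ (2*(N-M)) := pow_pos hε0 _
  have hr2 : (0:ℝ) ≤ (∏ i, r i)^2 := sq_nonneg _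
  calc ε ^ (2*(N-M)) * B.det ≤ ε ^ (2*(N-M)) * (2^M * (∏ i, r i)^2) :=
        mul_le_mul_of_nonneg_left (hHad.trans hstep5) hεp.le
    _ ≤ ε ^ (2*(N-M)) * (((M+N).choose N : ℝ) * (∏ i, r i)^2) :=
        mul_le_mul_of_nonneg_left (mul_le_mul_of_nonneg_right hchoose hr2) hεp.le
    _ = ((M + N).choose N : ℝ) * (∏ i, r i) ^ 2 * ε ^ (2 * (N - M)) := by ring
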